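/- arXiv:1012.4241 — 4 statements merged into one kernel-verified Lean document; each statement's English description precedes it below -/
import Mathlib

section
/- For every natural number n ≥ 1, the number S_n of strings of length n over the alphabet {0, 1, 2} that contain no occurrence of the consecutive pair 12 equals (φ^(2n+2) − φ^(−(2n+2)))/√5, where φ = (1 + √5)/2 is the golden ratio. -/
/-- `S n` is the number of strings (lists) of length `n` over the alphabet `{0,1,2}`
(modeled as `Fin 3`) in which the pair `12` does not occur consecutively,
i.e. `[1, 2]` is not an infix. -/
noncomputable def S (n : ℕ) : ℕ :=
  Nat.card {l : List (Fin 3) // l.length = n ∧ ¬ [1, 2] <:+: l}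

namespace SAux

/-- Avoiding strings of length `n`. -/
def A (n : ℕ) : Set (List (Fin 3)) := {l | l.length = n ∧ ¬ [1, 2] <:+: l}

/-- Avoiding strings of length `n` not starting with `2`. -/
def B (n : ℕ) : Set (List (Fin 3)) :=
  {l | l.length = n ∧ ¬ [1, 2] <:+: l ∧ l.head? ≠ some 2}

lemma finA (n : ℕ) : (A n).Finite :=
  (List.finite_length_eq (α := Fin 3) (n := n)).subset fun _ h => h.1

lemma finB (n : ℕ) : (B n).Finite :=
  (List.finite_length_eq (α := Fin 3) (n := n)).subset fun _ h => h.1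

lemma two_prefix (l : List (Fin 3)) : [2] <+: l ↔ l.head? = some 2 := by
  cases l with
  | nil => simp
  | cons a t => simp [List.cons_prefix_cons, eq_comm]

lemma infix_cons_12 (c : Fin 3) (l : List (Fin 3)) :
    [1, 2] <:+: (c :: l) ↔ [1, 2] <:+: l ∨ (c = 1 ∧ l.head? = some 2) := by
  rw [List.infix_cons_iff, List.cons_prefix_cons, two_prefix, @eq_comm _ 1 c, or_comm]

lemma cons_inj (c : Fin 3) : Function.Injective (fun l : List (Fin 3) => c :: l) := by
  intro a b h
  injection h

lemma disj_img (c d : Fin 3) (h : c ≠ d) (s t : Set (List (Fin 3))) :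
    Disjoint ((fun l : List (Fin 3) => c :: l) '' s)
      ((fun l : List (Fin 3) => d :: l) '' t) := by
  rw [Set.disjoint_left]
  rintro l ⟨a, _, rfl⟩ ⟨b, _, hb⟩
  simp only [List.cons.injEq] at hb
  exact h hb.1.symm

lemma A_succ (n : ℕ) :
    A (n + 1) =
      ((fun l : List (Fin 3) => (0 : Fin 3) :: l) '' A n ∪
        (fun l : List (Fin 3) => (2 : Fin 3) :: l) '' A n) ∪
        (fun l : List (Fin 3) => (1 : Fin 3) :: l) '' B n := by
  ext l
  constructor
  · rintro ⟨hlen, hP⟩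
    cases l with
    | nil => simp at hlen
    | cons c t =>
      rw [infix_cons_12] at hP
      push_neg at hP
      have hlt : t.length = n := by simpa using hlen
      fin_cases c
      · exact Or.inl (Or.inl ⟨t, ⟨hlt, hP.1⟩, rfl⟩)
      · exact Or.inr ⟨t, ⟨hlt, hP.1, hP.2 rfl⟩, rfl⟩
      · exact Or.inl (Or.inr ⟨t, ⟨hlt, hP.1⟩, rfl⟩)
  · rintro ((⟨t, ⟨hl, hP⟩, rfl⟩ | ⟨t, ⟨hl, hP⟩, rfl⟩) | ⟨t, ⟨hl, hP, hh⟩, rfl⟩) <;>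
      refine ⟨by simp [hl], ?_⟩ <;> rw [infix_cons_12] <;> rintro (h | ⟨h0, h2⟩)
    · exact hP h
    · exact absurd h0 (by decide)
    · exact hP h
    · exact absurd h0 (by decide)
    · exact hP h
    · exact hh h2

lemma B_succ (n : ℕ) :
    B (n + 1) =
      (fun l : List (Fin 3) => (0 : Fin 3) :: l) '' A n ∪
        (fun l : List (Fin 3) => (1 : Fin 3) :: l) '' B n := by
  ext l
  constructor
  · rintro ⟨hlen, hP, hh⟩
    cases l with
    | nil => simp at hlen
    | cons c t =>
      rw [infix_cons_12] at hP
      push_neg at hP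
      have hlt : t.length = n := by simpa using hlen
      have hc : c ≠ 2 := by simpa using hh
      fin_cases c
      · exact Or.inl ⟨t, ⟨hlt, hP.1⟩, rfl⟩
      · exact Or.inr ⟨t, ⟨hlt, hP.1, hP.2 rfl⟩, rfl⟩
      · exact absurd rfl hc
  · rintro (⟨t, ⟨hl, hP⟩, rfl⟩ | ⟨t, ⟨hl, hP, hh⟩, rfl⟩) <;>
      refine ⟨by simp [hl], ?_, by simp⟩ <;> rw [infix_cons_12] <;>
      rintro (h | ⟨h0, h2⟩)
    · exact hP h
    · exact absurd h0 (by decide)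
    · exact hP h
    · exact hh h2

lemma card_img (c : Fin 3) (s : Set (List (Fin 3))) :
    ((fun l : List (Fin 3) => c :: l) '' s).ncard = s.ncard :=
  Set.ncard_image_of_injective _ (cons_inj c)

lemma key : ∀ n : ℕ, (A n).ncard = Nat.fib (2 * n + 2) ∧ (B n).ncard = Nat.fib (2 * n + 1) := by
  intro n
  induction n with
  | zero =>
    have hA0 : A 0 = {([] : List (Fin 3))} := by
      ext l
      simp [A, List.length_eq_zero_iff]
      rintro rfl
      simp
    have hB0 : B 0 = {([] : List (Fin 3))} := by
      ext l
      simp [B, List.length_eq_zero_iff]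
      rintro rfl
      simp
    simp [hA0, hB0]
  | succ n ih =>
    have h02 : Disjoint ((fun l : List (Fin 3) => (0 : Fin 3) :: l) '' A n)
        ((fun l : List (Fin 3) => (2 : Fin 3) :: l) '' A n) :=
      disj_img _ _ (by decide) _ _
    have h01 : Disjoint
        (((fun l : List (Fin 3) => (0 : Fin 3) :: l) '' A n) ∪
          ((fun l : List (Fin 3) => (2 : Fin 3) :: l) '' A n))
        ((fun l : List (Fin 3) => (1 : Fin 3) :: l) '' B n) :=
      Disjoint.union_left (disj_img _ _ (by decide) _ _) (disj_img _ _ (by decide) _ _)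
    have hB01 : Disjoint ((fun l : List (Fin 3) => (0 : Fin 3) :: l) '' A n)
        ((fun l : List (Fin 3) => (1 : Fin 3) :: l) '' B n) :=
      disj_img _ _ (by decide) _ _
    constructor
    · rw [A_succ, Set.ncard_union_eq h01 (((finA n).image _).union ((finA n).image _))
        ((finB n).image _),
        Set.ncard_union_eq h02 ((finA n).image _) ((finA n).image _),
        card_img, card_img, card_img, ih.1, ih.2]
      have hf : Nat.fib (2 * (n + 1) + 2)
          = Nat.fib (2 * n + 2) + Nat.fib (2 * n + 2) + Nat.fib (2 * n + 1) := by
        have a1 : Nat.fib (2 * n + 2 + 2) = Nat.fib (2 * n + 2) + Nat.fib (2 * n + 2 + 1) :=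
          Nat.fib_add_two
        have a2 : Nat.fib (2 * n + 1 + 2) = Nat.fib (2 * n + 1) + Nat.fib (2 * n + 1 + 1) :=
          Nat.fib_add_two
        have b1 : Nat.fib (2 * n + 2 + 1) = Nat.fib (2 * n + 1 + 2) :=
          congrArg Nat.fib (by ring)
        have b2 : Nat.fib (2 * n + 1 + 1) = Nat.fib (2 * n + 2) :=
          congrArg Nat.fib (by ring)
        have c1 : Nat.fib (2 * (n + 1) + 2) = Nat.fib (2 * n + 2 + 2) :=
          congrArg Nat.fib (by ring)
        omega
      omega
    · rw [B_succ, Set.ncard_union_eq hB01 ((finA n).image _) ((finB n).image _),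
        card_img, card_img, ih.1, ih.2]
      have hf : Nat.fib (2 * (n + 1) + 1)
          = Nat.fib (2 * n + 2) + Nat.fib (2 * n + 1) := by
        have a2 : Nat.fib (2 * n + 1 + 2) = Nat.fib (2 * n + 1) + Nat.fib (2 * n + 1 + 1) :=
          Nat.fib_add_two
        have b2 : Nat.fib (2 * n + 1 + 1) = Nat.fib (2 * n + 2) :=
          congrArg Nat.fib (by ring)
        have c2 : Nat.fib (2 * (n + 1) + 1) = Nat.fib (2 * n + 1 + 2) :=
          congrArg Nat.fib (by ring)
        omega
      omega

lemma S_eq_fib (n : ℕ) : S n = Nat.fib (2 * n + 2) := by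
  have h1 : S n = Nat.card (A n) := rfl
  rw [h1, Nat.card_coe_set_eq, (key n).1]

end SAux

open Real goldenRatio

theorem S_closed_form (n : ℕ) (hn : 1 ≤ n) :
    (S n : ℝ) =
      (((1 + Real.sqrt 5) / 2) ^ (2 * (n : ℤ) + 2)
        - ((1 + Real.sqrt 5) / 2) ^ (-(2 * (n : ℤ) + 2))) / Real.sqrt 5 := by
  rw [SAux.S_eq_fib, Real.coe_fib_eq]
  have hzpow : ((1 + Real.sqrt 5) / 2 : ℝ) ^ (2 * (n : ℤ) + 2) = φ ^ (2 * n + 2) := by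
    rw [show (2 * (n : ℤ) + 2) = ((2 * n + 2 : ℕ) : ℤ) by push_cast; ring, zpow_natCast]
  have hψ : ψ ^ (2 * n + 2) = (φ ^ (2 * n + 2))⁻¹ := by
    have h : ψ = -φ⁻¹ := by rw [inv_goldenRatio]; ring
    rw [h, Even.neg_pow ⟨n + 1, by ring⟩, inv_pow]
  rw [hzpow, hψ, zpow_neg, hzpow]
end

section
/- For every natural number n ≥ 1, the number S_n of strings of length n over the alphabet {0, 1, 2} that contain no occurrence of the consecutive pair 12 equals the Fibonacci number F_{2n+2}, where F_0 = 0, F_1 = 1, and F_{k+2} = F_{k+1} + F_k. -/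
open Finset

/-- all lists of length n over Fin 3 -/
def LL : ℕ → Finset (List (Fin 3))
  | 0 => {[]}
  | n+1 => ((Finset.univ : Finset (Fin 3)) ×ˢ LL n).image (fun p => p.1 :: p.2)

lemma mem_LL (n : ℕ) (l : List (Fin 3)) : l ∈ LL n ↔ l.length = n := by
  induction n generalizing l with
  | zero => simp [LL, List.length_eq_zero_iff]
  | succ n ih =>
    simp only [LL, mem_image, mem_product, mem_univ, true_and, Prod.exists]
    constructor
    · rintro ⟨a, t, ht, rfl⟩; simp [ih t |>.1 ht]
    · intro h
      cases l with
      | nil => simp at h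
      | cons a t => exact ⟨a, t, (ih t).2 (by simpa using h), rfl⟩

noncomputable def AF (n : ℕ) : Finset (List (Fin 3)) :=
  (LL n).filter (fun l => ¬ [1,2] <:+: l)

noncomputable def CF (n : ℕ) : Finset (List (Fin 3)) :=
  (LL n).filter (fun l => ¬ [1,2] <:+: l ∧ l.head? ≠ some 2)

lemma prefix2 (t : List (Fin 3)) : [2] <+: t ↔ t.head? = some 2 := by
  cases t with
  | nil => simp
  | cons b t' => simp [List.cons_prefix_cons, eq_comm]

lemma infix_cons (a : Fin 3) (t : List (Fin 3)) :
    [1,2] <:+: (a :: t) ↔ (a = 1 ∧ t.head? = some 2) ∨ [1,2] <:+: t := by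
  rw [List.infix_cons_iff, List.cons_prefix_cons, prefix2, eq_comm]

lemma AF_succ (n : ℕ) :
    AF (n+1) = ((AF n).image (List.cons 0) ∪ (AF n).image (List.cons 2)) ∪ (CF n).image (List.cons 1) := by
  ext l
  simp only [AF, CF, mem_filter, mem_LL, mem_union, mem_image]
  constructor
  · rintro ⟨hlen, hgood⟩
    cases l with
    | nil => simp at hlen
    | cons a t =>
      have ht : t.length = n := by simpa using hlen
      rw [infix_cons] at hgood
      push_neg at hgood
      obtain ⟨v, hv⟩ := a
      interval_cases v
      · exact Or.inl (Or.inl ⟨t, ⟨ht, hgood.2⟩, rfl⟩)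
      · exact Or.inr ⟨t, ⟨ht, hgood.2, hgood.1 rfl⟩, rfl⟩
      · exact Or.inl (Or.inr ⟨t, ⟨ht, hgood.2⟩, rfl⟩)
  · rintro ((⟨t, ⟨ht, hg⟩, rfl⟩ | ⟨t, ⟨ht, hg⟩, rfl⟩) | ⟨t, ⟨ht, hg, hh⟩, rfl⟩)
    · refine ⟨by simp [ht], ?_⟩
      rw [infix_cons]; push_neg
      exact ⟨fun h => absurd h (by decide), hg⟩
    · refine ⟨by simp [ht], ?_⟩
      rw [infix_cons]; push_neg
      exact ⟨fun h => absurd h (by decide), hg⟩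
    · refine ⟨by simp [ht], ?_⟩
      rw [infix_cons]; push_neg
      exact ⟨fun _ => hh, hg⟩

lemma CF_succ (n : ℕ) :
    CF (n+1) = (AF n).image (List.cons 0) ∪ (CF n).image (List.cons 1) := by
  ext l
  simp only [AF, CF, mem_filter, mem_LL, mem_union, mem_image]
  constructor
  · rintro ⟨hlen, hgood, hhead⟩
    cases l with
    | nil => simp at hlen
    | cons a t =>
      have ht : t.length = n := by simpa using hlen
      rw [infix_cons] at hgood
      push_neg at hgood
      obtain ⟨v, hv⟩ := a
      interval_cases v
      · exact Or.inl ⟨t, ⟨ht, hgood.2⟩, rfl⟩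
      · exact Or.inr ⟨t, ⟨ht, hgood.2, hgood.1 rfl⟩, rfl⟩
      · exact absurd rfl hhead
  · rintro (⟨t, ⟨ht, hg⟩, rfl⟩ | ⟨t, ⟨ht, hg, hh⟩, rfl⟩)
    · refine ⟨by simp [ht], ?_, by simp⟩
      rw [infix_cons]; push_neg
      exact ⟨fun h => absurd h (by decide), hg⟩
    · refine ⟨by simp [ht], ?_, by simp⟩
      rw [infix_cons]; push_neg
      exact ⟨fun _ => hh, hg⟩

lemma disj_image (a b : Fin 3) (hab : a ≠ b) (s t : Finset (List (Fin 3))) :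
    Disjoint (s.image (List.cons a)) (t.image (List.cons b)) := by
  rw [Finset.disjoint_left]
  rintro l hl hl'
  simp only [mem_image] at hl hl'
  obtain ⟨x, _, rfl⟩ := hl
  obtain ⟨y, _, h⟩ := hl'
  exact hab (by injection h.symm)

lemma card_AF_CF (n : ℕ) :
    (AF n).card = Nat.fib (2*n + 2) ∧ (CF n).card = Nat.fib (2*n + 1) := by
  induction n with
  | zero =>
    have h1 : ¬ [1,2] <:+: ([] : List (Fin 3)) := by decide
    constructor
    · simp [AF, LL, Finset.filter_singleton, h1]
    · simp [CF, LL, Finset.filter_singleton, h1]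
  | succ n ih =>
    obtain ⟨hA, hC⟩ := ih
    have cinj : ∀ a : Fin 3, Function.Injective (List.cons a) := fun a => List.cons_injective
    have hAcard : (AF (n+1)).card = 2 * (AF n).card + (CF n).card := by
      rw [AF_succ, Finset.card_union_of_disjoint, Finset.card_union_of_disjoint,
        Finset.card_image_of_injective _ (cinj 0),
        Finset.card_image_of_injective _ (cinj 2),
        Finset.card_image_of_injective _ (cinj 1)]
      · ring
      · exact disj_image 0 2 (by decide) _ _
      · exact Finset.disjoint_union_left.2
          ⟨disj_image 0 1 (by decide) _ _, disj_image 2 1 (by decide) _ _⟩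
    have hCcard : (CF (n+1)).card = (AF n).card + (CF n).card := by
      rw [CF_succ, Finset.card_union_of_disjoint (disj_image 0 1 (by decide) _ _),
        Finset.card_image_of_injective _ (cinj 0),
        Finset.card_image_of_injective _ (cinj 1)]
    have fib3 : Nat.fib (2*n+3) = Nat.fib (2*n+2) + Nat.fib (2*n+1) := by
      have h := Nat.fib_add_two (n := 2*n+1)
      rw [show 2*n+1+2 = 2*n+3 by omega, show 2*n+1+1 = 2*n+2 by omega] at h
      omega
    have fib4 : Nat.fib (2*n+4) = 2 * Nat.fib (2*n+2) + Nat.fib (2*n+1) := by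
      have h := Nat.fib_add_two (n := 2*n+2)
      rw [show 2*n+2+2 = 2*n+4 by omega, show 2*n+2+1 = 2*n+3 by omega, fib3] at h
      omega
    constructor
    · rw [hAcard, hA, hC, show 2*(n+1)+2 = 2*n+4 from by ring, fib4]
    · rw [hCcard, hA, hC, show 2*(n+1)+1 = 2*n+3 from by ring, fib3]

theorem S_eq_fib (n : ℕ) (hn : 1 ≤ n) : S n = Nat.fib (2 * n + 2) := by
  have : S n = (AF n).card := by
    rw [S, ← Nat.card_eq_finsetCard]
    exact Nat.card_congr (Equiv.subtypeEquivRight (fun l => by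
      simp [AF, mem_LL, and_comm])).symm
  rw [this, (card_AF_CF n).1]
end

section
/- Let P_n = (3^n − S_n)/3^n be the probability that a uniformly random string of length n over the alphabet {0, 1, 2} contains at least one occurrence of the consecutive pair 12. Then P_n tends to 1 as n tends to infinity. -/
open Filter

/-- `P n` is the probability that a uniformly random ternary string of length `n`
contains at least one occurrence of the consecutive pair `12`. -/
noncomputable def P (n : ℕ) : ℝ := ((3 : ℝ) ^ n - S n) / 3 ^ n

private lemma A_finite (n : ℕ) :
    Finite {l : List (Fin 3) // l.length = n ∧ ¬ [1, 2] <:+: l} := by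
  have h : {l : List (Fin 3) | l.length = n ∧ ¬ [1, 2] <:+: l}.Finite :=
    (List.finite_length_eq (Fin 3) n).subset (fun l hl => hl.1)
  exact h.to_subtype

private lemma S_zero_le : S 0 ≤ 3 := by
  have hsurj : Function.Surjective
      (fun _ : Unit => (⟨[], rfl, by simp⟩ :
        {l : List (Fin 3) // l.length = 0 ∧ ¬ [1, 2] <:+: l})) := by
    rintro ⟨l, hl, hi⟩
    refine ⟨(), ?_⟩
    apply Subtype.ext
    simpa using (List.length_eq_zero_iff.mp hl).symm
  calc S 0 ≤ Nat.card Unit := Nat.card_le_card_of_surjective _ hsurj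
  _ ≤ 3 := by simp

private lemma S_one_le : S 1 ≤ 3 := by
  have hsurj : Function.Surjective
      (fun a : Fin 3 => (⟨[a], rfl, by
        intro h
        have := h.length_le
        simp at this⟩ :
        {l : List (Fin 3) // l.length = 1 ∧ ¬ [1, 2] <:+: l})) := by
    rintro ⟨l, hl, hi⟩
    obtain ⟨a, rfl⟩ := List.length_eq_one_iff.mp hl
    exact ⟨a, rfl⟩
  calc S 1 ≤ Nat.card (Fin 3) := Nat.card_le_card_of_surjective _ hsurj
  _ = 3 := by simp

private def Tn (n : ℕ) := {p : Fin 3 × Fin 3 // p ≠ (1, 2)} ×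
    {l : List (Fin 3) // l.length = n ∧ ¬ [1, 2] <:+: l}

private def fstep (n : ℕ) : Tn n → {l : List (Fin 3) // l.length = n + 2 ∧ ¬ [1, 2] <:+: l} :=
  fun x =>
    if h : ¬ [1, 2] <:+: (x.1.1.1 :: x.1.1.2 :: x.2.1) then
      ⟨x.1.1.1 :: x.1.1.2 :: x.2.1, by simp [x.2.2.1], h⟩
    else
      ⟨List.replicate (n + 2) 0, by simp, by
        intro hinf
        obtain ⟨s1, s2, hs⟩ := hinf
        have h1 : (1 : Fin 3) ∈ List.replicate (n + 2) (0 : Fin 3) := by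
          rw [← hs]; simp
        simp at h1⟩

private lemma S_step (n : ℕ) : S (n + 2) ≤ 8 * S n := by
  haveI := A_finite n
  have hsurj : Function.Surjective (fstep n) := by
    rintro ⟨l, hl, hi⟩
    match l, hl with
    | a :: b :: t, hl =>
      have hab : (a, b) ≠ ((1 : Fin 3), (2 : Fin 3)) := by
        intro h
        rw [Prod.ext_iff] at h
        obtain ⟨h1, h2⟩ := h
        simp only at h1 h2
        subst h1; subst h2
        exact hi ⟨[], t, rfl⟩
      have hti : ¬ [1, 2] <:+: t := fun h => hi (h.trans ((t.suffix_cons b).isInfix.trans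
        (((b :: t).suffix_cons a).isInfix)))
      refine ⟨⟨⟨(a, b), hab⟩, ⟨t, by simpa using hl, hti⟩⟩, ?_⟩
      simp only [fstep]
      rw [dif_pos hi]
  have hfin : Finite (Tn n) := by
    haveI := A_finite n
    unfold Tn
    infer_instance
  have h1 : S (n + 2) ≤ Nat.card (Tn n) := Nat.card_le_card_of_surjective (fstep n) hsurj
  have h2 : Nat.card (Tn n) = 8 * S n := by
    rw [Tn, Nat.card_prod]
    congr 1
    rw [Nat.card_eq_fintype_card]
    decide
  omega

private lemma S_le (n : ℕ) : S n ≤ 3 * 8 ^ (n / 2) := by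
  induction n using Nat.strong_induction_on with
  | _ n ih =>
    match n with
    | 0 => simpa using S_zero_le
    | 1 => simpa using S_one_le
    | (m + 2) =>
      have h1 := S_step m
      have h2 := ih m (by omega)
      have h3 : (m + 2) / 2 = m / 2 + 1 := by omega
      calc S (m + 2) ≤ 8 * S m := h1
      _ ≤ 8 * (3 * 8 ^ (m / 2)) := by omega
      _ = 3 * 8 ^ (m / 2 + 1) := by ring
      _ = 3 * 8 ^ ((m + 2) / 2) := by rw [h3]

theorem P_tendsto_one : Tendsto P atTop (nhds 1) := by
  have hzero : Tendsto (fun n : ℕ => (S n : ℝ) / 3 ^ n) atTop (nhds 0) := by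
    apply squeeze_zero (g := fun n : ℕ => 3 * (8 / 9 : ℝ) ^ (n / 2))
    · intro n
      positivity
    · intro n
      have h1 : (S n : ℝ) ≤ 3 * 8 ^ (n / 2) := by
        exact_mod_cast Nat.cast_le.mpr (S_le n)
      have h2 : (9 : ℝ) ^ (n / 2) ≤ 3 ^ n := by
        calc (9 : ℝ) ^ (n / 2) = 3 ^ (2 * (n / 2)) := by
              rw [pow_mul]; norm_num
        _ ≤ 3 ^ n := pow_le_pow_right₀ (by norm_num) (by omega)
      have h9 : (0 : ℝ) < 9 ^ (n / 2) := by positivity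
      have h3 : (0 : ℝ) < 3 ^ n := by positivity
      calc (S n : ℝ) / 3 ^ n ≤ (3 * 8 ^ (n / 2)) / 9 ^ (n / 2) := by
            apply div_le_div₀ (by positivity) h1 h9 h2
      _ = 3 * (8 / 9) ^ (n / 2) := by
            rw [div_pow, mul_div_assoc]
    · have hp : Tendsto (fun k : ℕ => (8 / 9 : ℝ) ^ k) atTop (nhds 0) :=
        tendsto_pow_atTop_nhds_zero_of_lt_one (by norm_num) (by norm_num)
      have hd : Tendsto (fun n : ℕ => n / 2) atTop atTop :=
        Nat.tendsto_div_const_atTop (by norm_num)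
      have := (hp.comp hd).const_mul (3 : ℝ)
      simpa using this
  have hP : P = fun n : ℕ => 1 - (S n : ℝ) / 3 ^ n := by
    funext n
    have h3 : (3 : ℝ) ^ n ≠ 0 := by positivity
    simp only [P]
    rw [sub_div, div_self h3]
  rw [hP]
  have h : Tendsto (fun n : ℕ => (1 : ℝ) - (S n : ℝ) / 3 ^ n) atTop (nhds (1 - 0)) :=
    Tendsto.sub tendsto_const_nhds hzero
  simpa using h
end

section
/- The B₂₃ encoding map enc from ternary strings to binary strings, defined recursively on lists over {0, 1, 2} by enc([]) = [], enc(1 :: 2 :: rest) = [1,1] ++ enc(rest), enc(0 :: rest) = [0,0] ++ enc(rest), enc(1 :: rest) = [0,1] ++ enc(rest) when the next character is not 2 (or 1 is the last character), and enc(2 :: rest) = [1,0] ++ enc(rest), is injective: two distinct ternary strings always receive distinct binary codes. -/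
/-- The B₂₃ encoding: scanning left to right, each occurrence of the ternary
pair `12` becomes the binary pair `11`; otherwise the single trits `0`, `1`, `2`
become `00`, `01`, `10` respectively. -/
def enc : List (Fin 3) → List (Fin 2)
  | [] => []
  | ⟨1, _⟩ :: ⟨2, _⟩ :: rest => 1 :: 1 :: enc rest
  | ⟨0, _⟩ :: rest => 0 :: 0 :: enc rest
  | ⟨1, _⟩ :: rest => 0 :: 1 :: enc rest
  | ⟨2, _⟩ :: rest => 1 :: 0 :: enc rest
  | ⟨n + 3, h⟩ :: _ => absurd h (by omega)

/-- A decoder for `enc`. -/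
def dec : List (Fin 2) → List (Fin 3)
  | ⟨0, _⟩ :: ⟨0, _⟩ :: r => 0 :: dec r
  | ⟨0, _⟩ :: ⟨1, _⟩ :: r => 1 :: dec r
  | ⟨1, _⟩ :: ⟨0, _⟩ :: r => 2 :: dec r
  | ⟨1, _⟩ :: ⟨1, _⟩ :: r => 1 :: 2 :: dec r
  | _ => []

@[simp] lemma dec_00 (r : List (Fin 2)) : dec (0 :: 0 :: r) = 0 :: dec r := rfl
@[simp] lemma dec_01 (r : List (Fin 2)) : dec (0 :: 1 :: r) = 1 :: dec r := rfl
@[simp] lemma dec_10 (r : List (Fin 2)) : dec (1 :: 0 :: r) = 2 :: dec r := rfl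
@[simp] lemma dec_11 (r : List (Fin 2)) : dec (1 :: 1 :: r) = 1 :: 2 :: dec r := rfl
@[simp] lemma dec_nil : dec [] = [] := rfl
@[simp] lemma enc_12 (r : List (Fin 3)) : enc (1 :: 2 :: r) = 1 :: 1 :: enc r := rfl
@[simp] lemma enc_0 (r : List (Fin 3)) : enc (0 :: r) = 0 :: 0 :: enc r := rfl
@[simp] lemma enc_2 (r : List (Fin 3)) : enc (2 :: r) = 1 :: 0 :: enc r := rfl
@[simp] lemma enc_10 (r : List (Fin 3)) : enc (1 :: 0 :: r) = 0 :: 1 :: enc (0 :: r) := rfl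
@[simp] lemma enc_11 (r : List (Fin 3)) : enc (1 :: 1 :: r) = 0 :: 1 :: enc (1 :: r) := rfl
@[simp] lemma enc_1 : enc [1] = [0, 1] := rfl

theorem dec_enc (a : List (Fin 3)) : dec (enc a) = a := by
  induction a using enc.induct with
  | case4 h rest hne ih =>
      rcases rest with _ | ⟨⟨n, hn⟩, r⟩
      · simp_all [enc, dec]
      · interval_cases n <;> simp_all [enc, dec]
  | _ => simp_all [enc, dec]

theorem enc_injective : Function.Injective enc := by
  intro a b h
  have := congrArg dec h
  rwa [dec_enc, dec_enc] at this
end
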